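/- Let X be a cycle set and φ, ψ λ-endomorphisms of G(X). Denote by T_φ the diagonal of the φ-cabled cycle set, T_φ(x) = λ_{φ(λ_x)}^{-1}(x). Then T_{φ+ψ} = T_φ ∘ T_ψ = T_ψ ∘ T_φ as permutations of X. In particular, with φ = k·id, one recovers T_{k·id} = T^k for all k ≥ 0. -/

import Mathlib

section Aux

variable {X G : Type*} [AddCommGroup G] [Group G]

lemma brace_one_eq_zero (hbrace : ∀ a b c : G, a * (b + c) = a * b - a + a * c) :
    (1 : G) = 0 := by
  have h := hbrace 1 0 0
  simp only [add_zero, one_mul, zero_sub] at h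
  exact neg_eq_zero.mp h.symm

lemma cab_key (hbrace : ∀ a b c : G, a * (b + c) = a * b - a + a * c)
    (act : G →* Equiv.Perm X) (lam : X → G)
    (hfund : ∀ (g : G) (x : X), lam (act g x) = g * lam x - g)
    (φ ψ : G →+ G)
    (hφ : ∀ g h : G, g * φ h - g = φ (g * h - g))
    (x : X) :
    (act ((φ + ψ) (lam x)))⁻¹ x
      = (act (φ (lam ((act (ψ (lam x)))⁻¹ x))))⁻¹ ((act (ψ (lam x)))⁻¹ x) := by
  have h10 : (1 : G) = 0 := brace_one_eq_zero hbrace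
  set a := lam x with ha
  have hinv : ∀ u : G, (act u)⁻¹ = act u⁻¹ := fun u => (map_inv act u).symm
  have hlam' : lam ((act (ψ a))⁻¹ x) = (ψ a)⁻¹ * a - (ψ a)⁻¹ := by
    rw [hinv, hfund]
  have hφ' : φ ((ψ a)⁻¹ * a - (ψ a)⁻¹) = (ψ a)⁻¹ * φ a - (ψ a)⁻¹ := (hφ _ _).symm
  have hu : (ψ a)⁻¹ * φ a - (ψ a)⁻¹ = (ψ a)⁻¹ * (φ a + ψ a) := by
    rw [hbrace, inv_mul_cancel, h10, add_zero]
  rw [hlam', hφ', hu, AddMonoidHom.add_apply, hinv, hinv, hinv]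
  rw [← Equiv.Perm.mul_apply, ← map_mul]
  congr 1
  group

lemma sum_lambda_endo (hbrace : ∀ a b c : G, a * (b + c) = a * b - a + a * c)
    (φ ψ : G →+ G)
    (hφ : ∀ g h : G, g * φ h - g = φ (g * h - g))
    (hψ : ∀ g h : G, g * ψ h - g = ψ (g * h - g)) :
    ∀ g h : G, g * (φ + ψ) h - g = (φ + ψ) (g * h - g) := by
  intro g h
  have : g * (φ h + ψ h) - g = (g * φ h - g) + (g * ψ h - g) := by
    rw [hbrace]; abel
  simp only [AddMonoidHom.add_apply]
  rw [this, hφ, hψ]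

end Aux

/-- diagonals of endocabled cycle sets: `T_{φ+ψ} = T_φ ∘ T_ψ = T_ψ ∘ T_φ`,
and in particular `T_{k·id} = T^k` for all `k ≥ 0`. -/
theorem diagonals_of_endocablings_are_homomorphisms
    {X G : Type*} [Finite X] [AddCommGroup G] [Group G]
    (op : X → X → X)
    (hbij : ∀ x : X, Function.Bijective (op x))
    (hcy : ∀ x y z : X, op (op x y) (op x z) = op (op y x) (op y z))
    (hbrace : ∀ a b c : G, a * (b + c) = a * b - a + a * c)
    (act : G →* Equiv.Perm X) (hinj : Function.Injective act)
    (lam : X → G)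
    (hlam : ∀ x y : X, act (lam x) (op x y) = y)
    (hfund : ∀ (g : G) (x : X), lam (act g x) = g * lam x - g)
    (hgen : AddSubgroup.closure (Set.range lam) = ⊤)
    (φ ψ : G →+ G)
    (hφ : ∀ g h : G, g * φ h - g = φ (g * h - g))
    (hψ : ∀ g h : G, g * ψ h - g = ψ (g * h - g)) :
    let Tc : (G →+ G) → X → X := fun χ x => (act (χ (lam x)))⁻¹ x
    (∀ x : X, Tc (φ + ψ) x = Tc φ (Tc ψ x)) ∧
    (∀ x : X, Tc (φ + ψ) x = Tc ψ (Tc φ x)) ∧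
    (∀ (k : ℕ) (x : X), Tc (k • AddMonoidHom.id G) x = (fun a => op a a)^[k] x) := by
  intro Tc
  have h10 : (1 : G) = 0 := brace_one_eq_zero hbrace
  have hid : ∀ g h : G, g * (AddMonoidHom.id G) h - g = (AddMonoidHom.id G) (g * h - g) :=
    fun g h => rfl
  have hksmul : ∀ k : ℕ, ∀ g h : G,
      g * (k • AddMonoidHom.id G) h - g = (k • AddMonoidHom.id G) (g * h - g) := by
    intro k
    induction k with
    | zero =>
      intro g h
      simp only [zero_smul, AddMonoidHom.zero_apply, ← h10, mul_one, sub_self]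
    | succ n ih =>
      intro g h
      have : (n + 1) • AddMonoidHom.id G = n • AddMonoidHom.id G + AddMonoidHom.id G :=
        succ_nsmul _ n
      rw [this]
      exact sum_lambda_endo hbrace _ _ ih hid g h
  have hopxx : ∀ x : X, op x x = (act (lam x))⁻¹ x := by
    intro x
    have h := hlam x x
    calc op x x = (act (lam x))⁻¹ (act (lam x) (op x x)) := (Equiv.symm_apply_apply _ _).symm
      _ = (act (lam x))⁻¹ x := by rw [h]
  refine ⟨?_, ?_, ?_⟩
  · intro x
    exact cab_key hbrace act lam hfund φ ψ hφ x
  · intro x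
    have := cab_key hbrace act lam hfund ψ φ hψ x
    rwa [add_comm ψ φ] at this
  · intro k
    induction k with
    | zero =>
      intro x
      simp only [zero_smul, AddMonoidHom.zero_apply, Function.iterate_zero, id_eq, Tc]
      rw [← h10, map_one]
      rfl
    | succ n ih =>
      intro x
      have hstep : (n + 1) • AddMonoidHom.id G = n • AddMonoidHom.id G + AddMonoidHom.id G :=
        succ_nsmul _ n
      have hkey := cab_key hbrace act lam hfund (n • AddMonoidHom.id G) (AddMonoidHom.id G)
        (hksmul n) x
      have hTcid : Tc (AddMonoidHom.id G) x = op x x := by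
        simp only [Tc, AddMonoidHom.id_apply]
        exact (hopxx x).symm
      show Tc ((n + 1) • AddMonoidHom.id G) x = (fun a => op a a)^[n + 1] x
      rw [hstep]
      calc Tc (n • AddMonoidHom.id G + AddMonoidHom.id G) x
          = Tc (n • AddMonoidHom.id G) (Tc (AddMonoidHom.id G) x) := hkey
        _ = Tc (n • AddMonoidHom.id G) (op x x) := by rw [hTcid]
        _ = (fun a => op a a)^[n] (op x x) := ih (op x x)
        _ = (fun a => op a a)^[n + 1] x := (Function.iterate_succ_apply _ n x).symm
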